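/- Suppose f ∈ ℚ[x] with f(0) ≠ 0 has no multiple roots, and let ⟨Ω⟩ = {∏_i r_i^{v(i)} : v ∈ ℤ^n} be the subgroup of ℂ* generated by the roots of f. Then the map sending σ ∈ G_f to the automorphism of ⟨Ω⟩ determined by ∏_i r_i^{v(i)} ↦ ∏_i σ(r_i)^{v(i)} is a group isomorphism from G_f onto the group {η ∈ Aut(⟨Ω⟩) : η(r) ∈ Ω for every r ∈ Ω}, with inverse given by restriction η ↦ η|_Ω. -/

import Mathlib

noncomputable section

open Polynomial

/-- `z` is a root of rational: some positive power of `z` is rational. -/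
def IsRootOfRational (z : ℂ) : Prop := ∃ k : ℕ, 0 < k ∧ ∃ q : ℚ, z ^ k = (q : ℂ)

/-- `z` is a rational number (viewed in `ℂ`). -/
def IsRat (z : ℂ) : Prop := ∃ q : ℚ, z = (q : ℂ)

/-- The Galois-like group `G_f`: permutations of the (indexed) roots preserving all
multiplicative relations. -/
def GaloisLike {ι : Type*} [Fintype ι] (r : ι → ℂ) : Set (Equiv.Perm ι) :=
  {σ | ∀ v : ι → ℤ, (∏ i, r i ^ v i) = 1 → (∏ i, r (σ i) ^ v i) = 1}

/-- The Galois-like group `G_f^B`. -/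
def GaloisLikeB {ι : Type*} [Fintype ι] (r : ι → ℂ) : Set (Equiv.Perm ι) :=
  {σ | ∀ v : ι → ℤ, IsRat (∏ i, r i ^ v i) → (∏ i, r (σ i) ^ v i) = ∏ i, r i ^ v i}

/-- The Galois-like group `G_f^ℚ`. -/
def GaloisLikeQ {ι : Type*} [Fintype ι] (r : ι → ℂ) : Set (Equiv.Perm ι) :=
  {σ | ∀ v : ι → ℤ, IsRat (∏ i, r i ^ v i) → IsRat (∏ i, r (σ i) ^ v i)}

/-- The exponent lattice of the vector `w` is trivial. -/
def VecLatticeTrivial {ι : Type*} [Fintype ι] (w : ι → ℂ) : Prop :=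
  ∀ u : ι → ℤ, (∏ i, w i ^ u i) = 1 → ∀ i j : ι, u i = u j

/-- The lattice `R_w^ℚ` of the vector `w` is trivial. -/
def VecLatticeQTrivial {ι : Type*} [Fintype ι] (w : ι → ℂ) : Prop :=
  ∀ u : ι → ℤ, IsRat (∏ i, w i ^ u i) → ∀ i j : ι, u i = u j

/-- A subset `M ⊆ ℚ[G/H]` is ℚ-admissible: there is `μ ∈ ℚ[G]` with stabilizer
(under left multiplication) exactly `H` such that `mμ = 0` for all `m ∈ M`
(here `Σ_{g∈G} m(ḡ) • gμ = |H| ⋅ (mμ)`, so we express `mμ = 0` this way). -/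
def IsQAdmissible {G : Type*} [Group G] (H : Subgroup G) (M : Set ((G ⧸ H) →₀ ℚ)) : Prop :=
  ∃ μ : MonoidAlgebra ℚ G,
    (∀ g : G, MonoidAlgebra.single g (1 : ℚ) * μ = μ ↔ g ∈ H) ∧
    ∀ m ∈ M, (∑ᶠ g : G, m (QuotientGroup.mk g) • (MonoidAlgebra.single g (1 : ℚ) * μ)) = 0

/-- A ℚ-subspace of `ℚ[G/H]` is a `ℚ[G]`-submodule iff it is stable under the
permutation action of `G` on `G/H`. -/
def IsGStable {G : Type*} [Group G] (H : Subgroup G) (M : Submodule ℚ ((G ⧸ H) →₀ ℚ)) : Prop :=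
  ∀ g : G, ∀ m ∈ M, Finsupp.mapDomain (fun x : G ⧸ H => g • x) m ∈ M

/-- The pair `(G,H)` is ℚ-trivial: the only ℚ-admissible `ℚ[G]`-submodules of `ℚ[G/H]`
are `0` and `V₁` (the line of constant coefficient vectors). -/
def QTrivialPair {G : Type*} [Group G] (H : Subgroup G) : Prop :=
  ∀ M : Submodule ℚ ((G ⧸ H) →₀ ℚ), IsGStable H M →
    IsQAdmissible H (M : Set ((G ⧸ H) →₀ ℚ)) →
    M = ⊥ ∨ (M : Set ((G ⧸ H) →₀ ℚ)) = {m | ∃ a : ℚ, ∀ x, m x = a}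

/-- The action of `G` on `G/H` is transitive. -/
def PairTransitive {G : Type*} [Group G] (H : Subgroup G) : Prop :=
  ∀ x y : G ⧸ H, ∃ g : G, g • x = y

/-- The action of `G` on `G/H` is doubly transitive. -/
def PairDoublyTransitive {G : Type*} [Group G] (H : Subgroup G) : Prop :=
  ∀ x₁ x₂ y₁ y₂ : G ⧸ H, x₁ ≠ x₂ → y₁ ≠ y₂ → ∃ g : G, g • x₁ = y₁ ∧ g • x₂ = y₂

/-- The action of `G` on `G/H` is doubly homogeneous. -/
def PairDoublyHomogeneous {G : Type*} [Group G] (H : Subgroup G) : Prop :=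
  ∀ x₁ x₂ y₁ y₂ : G ⧸ H, x₁ ≠ x₂ → y₁ ≠ y₂ →
    ∃ g : G, ({g • x₁, g • x₂} : Set (G ⧸ H)) = {y₁, y₂}

/-- A set of permutations of `ι` acts transitively. -/
def SetTransitive {ι : Type*} (S : Set (Equiv.Perm ι)) : Prop :=
  ∀ i j : ι, ∃ σ ∈ S, σ i = j

/-- A set of permutations of `ι` acts doubly transitively. -/
def SetDoublyTransitive {ι : Type*} (S : Set (Equiv.Perm ι)) : Prop :=
  ∀ i j k l : ι, i ≠ j → k ≠ l → ∃ σ ∈ S, σ i = k ∧ σ j = l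

/-- A set of permutations of `ι` acts doubly homogeneously. -/
def SetDoublyHomogeneous {ι : Type*} (S : Set (Equiv.Perm ι)) : Prop :=
  ∀ i j k l : ι, i ≠ j → k ≠ l → ∃ σ ∈ S, ({σ i, σ j} : Set ι) = {k, l}



section Aux

open Classical in
lemma aux_prod_comp_zpow {α : Type*} [DivisionCommMonoid α] {ι : Type*} [Fintype ι]
    (σ : Equiv.Perm ι) (g : ι → α) (v : ι → ℤ) :
    ∏ i, g (σ i) ^ v i = ∏ j, g j ^ v (σ.symm j) := by
  rw [← Equiv.prod_comp σ (fun j => g j ^ v (σ.symm j))]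
  simp

lemma aux_one_mem {ι : Type*} [Fintype ι] (r : ι → ℂ) :
    (1 : Equiv.Perm ι) ∈ GaloisLike r := by
  intro v h; simpa using h

lemma aux_mul_mem {ι : Type*} [Fintype ι] (r : ι → ℂ) {σ τ : Equiv.Perm ι}
    (hσ : σ ∈ GaloisLike r) (hτ : τ ∈ GaloisLike r) : σ * τ ∈ GaloisLike r := by
  intro v hv
  have h1 := hτ v hv
  rw [aux_prod_comp_zpow τ r v] at h1
  have h2 := hσ _ h1
  have h3 : ∏ i, r (σ (τ i)) ^ v i = ∏ i, r (σ i) ^ v (τ.symm i) := by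
    rw [← Equiv.prod_comp τ (fun j => r (σ j) ^ v (τ.symm j))]
    simp
  simpa [Equiv.Perm.mul_apply, h3] using h2

lemma aux_inv_mem {ι : Type*} [Fintype ι] (r : ι → ℂ) {σ : Equiv.Perm ι}
    (hσ : σ ∈ GaloisLike r) : σ⁻¹ ∈ GaloisLike r := by
  have hpow : ∀ k : ℕ, σ ^ k ∈ GaloisLike r := by
    intro k
    induction k with
    | zero => exact aux_one_mem r
    | succ k ih => rw [pow_succ]; exact aux_mul_mem r ih hσ
  have h1 : σ * σ ^ (orderOf σ - 1) = 1 := by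
    rw [← pow_succ', Nat.sub_add_cancel (orderOf_pos σ), pow_orderOf_eq_one]
  have h2 : σ⁻¹ = σ ^ (orderOf σ - 1) := (eq_inv_of_mul_eq_one_right h1).symm
  rw [h2]; exact hpow _

end Aux

/-- Let `⟨Ω⟩ ≤ ℂˣ` be the multiplicative group generated by the roots of
`f`. The map sending `σ ∈ G_f` to the automorphism of `⟨Ω⟩` determined by
`∏ rᵢ^{vᵢ} ↦ ∏ σ(rᵢ)^{vᵢ}` (i.e. sending each root `rᵢ` to `σ(rᵢ)`) is a group
isomorphism from `G_f` onto `{η ∈ Aut(⟨Ω⟩) : η(Ω) ⊆ Ω}`, with inverse given by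
restriction to `Ω`. -/
theorem statement6 (f : Polynomial ℚ) (hf0 : f.eval 0 ≠ 0) (n : ℕ) (hn : n = f.natDegree)
    (r : Fin n → ℂ) (hinj : Function.Injective r)
    (hroot : ∀ i, Polynomial.aeval (r i) f = 0)
    (hall : ∀ z : ℂ, Polynomial.aeval z f = 0 → ∃ i, r i = z)
    (Ω' : Subgroup ℂˣ) (hΩ : Ω' = Subgroup.closure {x : ℂˣ | ∃ i, (x : ℂ) = r i})
    (A : Set (MulAut ↥Ω'))
    (hA : A = {η : MulAut ↥Ω' | ∀ (x : ↥Ω') (i : Fin n), ((x : ℂˣ) : ℂ) = r i →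
        ∃ j : Fin n, (((η x : ↥Ω') : ℂˣ) : ℂ) = r j}) :
    ∃ E : Equiv.Perm (Fin n) → MulAut ↥Ω',
      -- E σ is the automorphism determined by rᵢ ↦ σ(rᵢ)
      (∀ σ ∈ GaloisLike r, ∀ (x : ↥Ω') (i : Fin n), ((x : ℂˣ) : ℂ) = r i →
          (((E σ x : ↥Ω') : ℂˣ) : ℂ) = r (σ i)) ∧
      -- E maps G_f into A
      (∀ σ ∈ GaloisLike r, E σ ∈ A) ∧
      -- E is multiplicative on G_f
      (∀ σ ∈ GaloisLike r, ∀ τ ∈ GaloisLike r, E (σ * τ) = E σ * E τ) ∧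
      -- E is injective on G_f
      (∀ σ ∈ GaloisLike r, ∀ τ ∈ GaloisLike r, E σ = E τ → σ = τ) ∧
      -- E is surjective onto A, the inverse being restriction to Ω:
      -- for η ∈ A the unique preimage σ satisfies η(rᵢ) = r_{σ i}
      (∀ η ∈ A, ∃ σ ∈ GaloisLike r, E σ = η ∧
          ∀ (x : ↥Ω') (i : Fin n), ((x : ℂˣ) : ℂ) = r i →
            (((η x : ↥Ω') : ℂˣ) : ℂ) = r (σ i)) := by
  classical
  have hr0 : ∀ i, r i ≠ 0 := by
    intro i h
    apply hf0
    have h1 := hroot i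
    rw [h] at h1
    rw [Polynomial.aeval_def, Polynomial.eval₂_at_zero, Polynomial.coeff_zero_eq_eval_zero] at h1
    rwa [_root_.map_eq_zero] at h1
  set R : Fin n → ℂˣ := fun i => Units.mk0 (r i) (hr0 i) with hRdef
  set φ : (Fin n → ℤ) → ℂˣ := fun v => ∏ i, R i ^ v i with hφdef
  have hφval : ∀ v, ((φ v : ℂˣ) : ℂ) = ∏ i, r i ^ v i := by
    intro v
    rw [hφdef]
    push_cast
    rfl
  have hmemR : ∀ i, R i ∈ Ω' := by
    intro i
    rw [hΩ]
    exact Subgroup.subset_closure ⟨i, rfl⟩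
  have hmem : ∀ v, φ v ∈ Ω' := by
    intro v
    exact Subgroup.prod_mem _ (fun i _ => Subgroup.zpow_mem _ (hmemR i) _)
  have hadd : ∀ v w, φ (v + w) = φ v * φ w := by
    intro v w
    simp [hφdef, zpow_add, Finset.prod_mul_distrib]
  have hneg : ∀ v, φ (-v) = (φ v)⁻¹ := by
    intro v
    simp [hφdef, zpow_neg]
  have hsub : ∀ v w, φ (v - w) = φ v * (φ w)⁻¹ := by
    intro v w
    rw [sub_eq_add_neg, hadd, hneg]
  have hφsingle : ∀ i, φ (Pi.single i 1) = R i := by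
    intro i
    show (∏ j, R j ^ (Pi.single i 1 : Fin n → ℤ) j) = R i
    rw [show (∏ j, R j ^ (Pi.single i 1 : Fin n → ℤ) j) = R i ^ ((Pi.single i 1 : Fin n → ℤ) i) from
      Finset.prod_eq_single i (fun j _ hj => by simp [Pi.single_eq_of_ne hj]) (by simp)]
    simp
  have hgen : ∀ x : ℂˣ, x ∈ Ω' → ∃ v, φ v = x := by
    intro x hx
    rw [hΩ] at hx
    induction hx using Subgroup.closure_induction with
    | mem y hy =>
      obtain ⟨i, hi⟩ := hy
      exact ⟨Pi.single i 1, by rw [hφsingle]; exact Units.ext hi.symm⟩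
    | one => exact ⟨0, by simp [hφdef]⟩
    | mul y z _ _ hy hz =>
      obtain ⟨v, hv⟩ := hy
      obtain ⟨w, hw⟩ := hz
      exact ⟨v + w, by rw [hadd, hv, hw]⟩
    | inv y _ hy =>
      obtain ⟨v, hv⟩ := hy
      exact ⟨-v, by rw [hneg, hv]⟩
  have hx' : ∀ x : ↥Ω', ∃ v, x = ⟨φ v, hmem v⟩ := by
    intro x
    obtain ⟨v, hv⟩ := hgen x.1 x.2
    exact ⟨v, Subtype.ext hv.symm⟩
  have hkey : ∀ σ ∈ GaloisLike r, ∀ v w, φ v = φ w →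
      φ (fun j => v (σ.symm j)) = φ (fun j => w (σ.symm j)) := by
    intro σ hσ v w h
    have h1 : φ (v - w) = 1 := by rw [hsub, h, mul_inv_cancel]
    have h2 : (∏ i, r i ^ (v - w) i) = 1 := by rw [← hφval, h1, Units.val_one]
    have h3 := hσ _ h2
    rw [aux_prod_comp_zpow σ r] at h3
    have h4 : φ (fun j => (v - w) (σ.symm j)) = 1 := Units.ext (by rw [hφval]; simpa using h3)
    have h5 : (fun j => (v - w) (σ.symm j)) =
        (fun j => v (σ.symm j)) - (fun j => w (σ.symm j)) := rfl
    rw [h5, hsub] at h4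
    exact mul_inv_eq_one.mp h4
  set Φ : Equiv.Perm (Fin n) → ↥Ω' → ↥Ω' := fun σ x =>
    ⟨φ (fun j => (Classical.choose (hgen x.1 x.2)) (σ.symm j)), hmem _⟩ with hΦdef
  have hΦspec : ∀ σ ∈ GaloisLike r, ∀ v (h : φ v ∈ Ω'),
      Φ σ (⟨φ v, h⟩ : ↥Ω') = ⟨φ (fun j => v (σ.symm j)), hmem _⟩ := by
    intro σ hσ v h
    apply Subtype.ext
    exact hkey σ hσ _ v (Classical.choose_spec (hgen (φ v) h))
  have hmulsymm : ∀ (σ τ : Equiv.Perm (Fin n)) (j : Fin n),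
      (σ * τ).symm j = τ.symm (σ.symm j) := fun _ _ _ => rfl
  set E : Equiv.Perm (Fin n) → MulAut ↥Ω' := fun σ =>
    if hσ : σ ∈ GaloisLike r then
      { toFun := Φ σ
        invFun := Φ σ⁻¹
        left_inv := by
          intro x
          obtain ⟨v, rfl⟩ := hx' x
          rw [hΦspec σ hσ, hΦspec σ⁻¹ (aux_inv_mem r hσ)]
          apply Subtype.ext
          show φ _ = φ v
          congr 1
          funext j
          show v (σ.symm ((σ⁻¹ : Equiv.Perm (Fin n)).symm j)) = v j
          simp [Equiv.Perm.inv_def]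
        right_inv := by
          intro x
          obtain ⟨v, rfl⟩ := hx' x
          rw [hΦspec σ⁻¹ (aux_inv_mem r hσ), hΦspec σ hσ]
          apply Subtype.ext
          show φ _ = φ v
          congr 1
          funext j
          show v ((σ⁻¹ : Equiv.Perm (Fin n)).symm (σ.symm j)) = v j
          simp [Equiv.Perm.inv_def]
        map_mul' := by
          intro x y
          obtain ⟨v, rfl⟩ := hx' x
          obtain ⟨w, rfl⟩ := hx' y
          have hxy : (⟨φ v, hmem v⟩ : ↥Ω') * ⟨φ w, hmem w⟩ = ⟨φ (v + w), hmem _⟩ :=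
            Subtype.ext (by show φ v * φ w = φ (v + w); rw [hadd])
          show Φ σ (⟨φ v, hmem v⟩ * ⟨φ w, hmem w⟩) = Φ σ ⟨φ v, hmem v⟩ * Φ σ ⟨φ w, hmem w⟩
          rw [hxy, hΦspec σ hσ, hΦspec σ hσ, hΦspec σ hσ]
          apply Subtype.ext
          show φ _ = φ _ * φ _
          rw [← hadd]
          rfl }
    else 1 with hEdef
  have hE : ∀ σ, σ ∈ GaloisLike r → ∀ v (h : φ v ∈ Ω'),
      E σ (⟨φ v, h⟩ : ↥Ω') = ⟨φ (fun j => v (σ.symm j)), hmem _⟩ := by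
    intro σ hσ v h
    simp only [hEdef, dif_pos hσ]
    exact hΦspec σ hσ v h
  have hsingle' : ∀ (σ : Equiv.Perm (Fin n)) (i : Fin n),
      (fun j => (Pi.single i 1 : Fin n → ℤ) (σ.symm j)) = Pi.single (σ i) 1 := by
    intro σ i
    funext j
    simp [Pi.single_apply, Equiv.symm_apply_eq]
  -- bullet 1
  have hb1 : ∀ σ ∈ GaloisLike r, ∀ (x : ↥Ω') (i : Fin n), ((x : ℂˣ) : ℂ) = r i →
      (((E σ x : ↥Ω') : ℂˣ) : ℂ) = r (σ i) := by
    intro σ hσ x i hx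
    have hxeq : x = ⟨φ (Pi.single i 1), hmem _⟩ := by
      apply Subtype.ext
      show (x : ℂˣ) = φ (Pi.single i 1)
      rw [hφsingle]
      exact Units.ext hx
    rw [hxeq, hE σ hσ]
    show ((φ _ : ℂˣ) : ℂ) = r (σ i)
    rw [hsingle' σ i, hφsingle]
    rfl
  refine ⟨E, hb1, ?_, ?_, ?_, ?_⟩
  · -- bullet 2
    intro σ hσ
    rw [hA]
    intro x i hx
    exact ⟨σ i, hb1 σ hσ x i hx⟩
  · -- bullet 3
    intro σ hσ τ hτ
    apply MulEquiv.ext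
    intro x
    obtain ⟨v, rfl⟩ := hx' x
    rw [MulAut.mul_apply, hE τ hτ, hE σ hσ, hE (σ * τ) (aux_mul_mem r hσ hτ)]
    rfl
  · -- bullet 4
    intro σ hσ τ hτ h
    apply Equiv.ext
    intro i
    apply hinj
    have h1 := hb1 σ hσ ⟨φ (Pi.single i 1), hmem _⟩ i (by
      show (((φ (Pi.single i 1) : ℂˣ)) : ℂ) = r i
      rw [hφsingle]; rfl)
    have h2 := hb1 τ hτ ⟨φ (Pi.single i 1), hmem _⟩ i (by
      show (((φ (Pi.single i 1) : ℂˣ)) : ℂ) = r i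
      rw [hφsingle]; rfl)
    rw [← h1, ← h2, h]
  · -- bullet 5
    intro η hη
    rw [hA] at hη
    have hchoice : ∀ i : Fin n, ∃ j, (((η ⟨R i, hmemR i⟩ : ↥Ω') : ℂˣ) : ℂ) = r j :=
      fun i => hη ⟨R i, hmemR i⟩ i rfl
    choose g hg using hchoice
    have hginj : Function.Injective g := by
      intro i i' hgi
      have e1 : η ⟨R i, hmemR i⟩ = η ⟨R i', hmemR i'⟩ := by
        apply Subtype.ext
        apply Units.ext
        rw [hg i, hg i', hgi]
      have e2 : (⟨R i, hmemR i⟩ : ↥Ω') = ⟨R i', hmemR i'⟩ := η.injective e1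
      apply hinj
      show r i = r i'
      have := congrArg (fun z : ↥Ω' => ((z : ℂˣ) : ℂ)) e2
      exact this
    have hgbij : Function.Bijective g := Finite.injective_iff_bijective.mp hginj
    set σ : Equiv.Perm (Fin n) := Equiv.ofBijective g hgbij with hσdef
    have hσg : ∀ i, σ i = g i := fun i => rfl
    have hxprod : ∀ v, (⟨φ v, hmem v⟩ : ↥Ω') = ∏ i, (⟨R i, hmemR i⟩ : ↥Ω') ^ v i := by
      intro v
      apply Subtype.ext
      push_cast
      rfl
    have hηspec : ∀ v (h : φ v ∈ Ω'), η ⟨φ v, h⟩ = ⟨φ (fun j => v (σ.symm j)), hmem _⟩ := by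
      intro v h
      have h0 : (⟨φ v, h⟩ : ↥Ω') = ⟨φ v, hmem v⟩ := rfl
      rw [h0, hxprod v, map_prod]
      have h1 : ∀ i, η ((⟨R i, hmemR i⟩ : ↥Ω') ^ v i) = (⟨R (g i), hmemR _⟩ : ↥Ω') ^ v i := by
        intro i
        rw [map_zpow]
        congr 1
        exact Subtype.ext (Units.ext (hg i))
      rw [Finset.prod_congr rfl (fun i _ => h1 i)]
      apply Subtype.ext
      push_cast
      rw [show (∏ i, R (g i) ^ v i) = ∏ i, R (σ i) ^ v i from rfl,
        aux_prod_comp_zpow σ R v]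
    have hσmem : σ ∈ GaloisLike r := by
      intro v hv
      have h1 : φ v = 1 := Units.ext (by rw [hφval]; simpa using hv)
      have h2 : (⟨φ v, hmem v⟩ : ↥Ω') = 1 := Subtype.ext (by simpa using h1)
      have h3 := hηspec v (hmem v)
      rw [h2, map_one] at h3
      have h4 : φ (fun j => v (σ.symm j)) = 1 := by
        have := congrArg (fun z : ↥Ω' => (z : ℂˣ)) h3.symm
        simpa using this
      have h5 : (∏ j, r j ^ v (σ.symm j)) = 1 := by
        rw [← hφval, h4, Units.val_one]
      rw [aux_prod_comp_zpow σ r v]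
      exact h5
    refine ⟨σ, hσmem, ?_, ?_⟩
    · apply MulEquiv.ext
      intro x
      obtain ⟨v, rfl⟩ := hx' x
      rw [hE σ hσmem, hηspec v]
    · intro x i hx
      have hxeq : x = ⟨R i, hmemR i⟩ := Subtype.ext (Units.ext hx)
      rw [hxeq]
      rw [hσg i]
      exact hg i



end
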